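/- Let ψ₁(r) = c·(1+r²)^{-5/4} for r ≥ 0 with c > 0. Then the radial Laplacian of ψ₁, namely Δψ₁(r) = ψ₁''(r) + (2/r)ψ₁'(r), satisfies Δψ₁ = G'(ψ₁²)·ψ₁ where G'(s) = (15/(4c^{4/5}))·s^{2/5} − (45/(4c^{8/5}))·s^{4/5}. -/

import Mathlib

/-- Example 1: the power-law form factor `ψ₁(r) = c (1+r²)^{-5/4}` satisfies the charge
equilibrium equation `Δψ₁ = G'(ψ₁²) ψ₁` with
`G'(s) = (15/(4 c^{4/5})) s^{2/5} − (45/(4 c^{8/5})) s^{4/5}`, where `Δ` is the radial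
three-dimensional Laplacian `Δψ(r) = ψ''(r) + (2/r) ψ'(r)`. -/
theorem stmt_0 (c : ℝ) (hc : 0 < c) (ψ : ℝ → ℝ)
    (hψ : ∀ r : ℝ, ψ r = c * (1 + r ^ 2) ^ (-(5 : ℝ) / 4))
    (G' : ℝ → ℝ)
    (hG : ∀ s : ℝ, G' s =
      15 / (4 * c ^ ((4 : ℝ) / 5)) * s ^ ((2 : ℝ) / 5)
        - 45 / (4 * c ^ ((8 : ℝ) / 5)) * s ^ ((4 : ℝ) / 5)) :
    ∀ r : ℝ, 0 < r →
      deriv (deriv ψ) r + (2 / r) * deriv ψ r = G' (ψ r ^ 2) * ψ r := by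
  have hψ' : ψ = fun r : ℝ => c * (1 + r ^ 2) ^ (-(5 : ℝ) / 4) := funext hψ
  subst hψ'
  have hA : ∀ x : ℝ, (0 : ℝ) < 1 + x ^ 2 := fun x => by positivity
  have hbase : ∀ x : ℝ, HasDerivAt (fun r : ℝ => 1 + r ^ 2) (2 * x) x := by
    intro x
    simpa using ((hasDerivAt_pow 2 x).const_add 1)
  have hD1 : ∀ x : ℝ, HasDerivAt (fun r : ℝ => c * (1 + r ^ 2) ^ (-(5 : ℝ) / 4))
      (-(5 : ℝ) * c / 2 * (x * (1 + x ^ 2) ^ (-(9 : ℝ) / 4))) x := by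
    intro x
    have h := ((hbase x).rpow_const (p := -(5 : ℝ) / 4) (Or.inl (hA x).ne')).const_mul c
    have he : (-(5 : ℝ) / 4 - 1) = -(9 : ℝ) / 4 := by norm_num
    rw [he] at h
    refine h.congr_deriv ?_
    ring
  have hderiv1 : deriv (fun r : ℝ => c * (1 + r ^ 2) ^ (-(5 : ℝ) / 4)) =
      fun x : ℝ => -(5 : ℝ) * c / 2 * (x * (1 + x ^ 2) ^ (-(9 : ℝ) / 4)) :=
    funext fun x => (hD1 x).deriv
  intro r hr
  have hg : HasDerivAt (fun x : ℝ => x * (1 + x ^ 2) ^ (-(9 : ℝ) / 4))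
      (1 * (1 + r ^ 2) ^ (-(9 : ℝ) / 4)
        + r * (2 * r * (-(9 : ℝ) / 4) * (1 + r ^ 2) ^ (-(13 : ℝ) / 4))) r := by
    have h := (hasDerivAt_id r).mul
      ((hbase r).rpow_const (p := -(9 : ℝ) / 4) (Or.inl (hA r).ne'))
    have he : (-(9 : ℝ) / 4 - 1) = -(13 : ℝ) / 4 := by norm_num
    rw [he] at h
    exact h
  have hD2 : deriv (deriv (fun r : ℝ => c * (1 + r ^ 2) ^ (-(5 : ℝ) / 4))) r
      = -(5 : ℝ) * c / 2 * (1 * (1 + r ^ 2) ^ (-(9 : ℝ) / 4)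
        + r * (2 * r * (-(9 : ℝ) / 4) * (1 + r ^ 2) ^ (-(13 : ℝ) / 4))) := by
    rw [hderiv1]
    exact (hg.const_mul _).deriv
  rw [hD2, hderiv1, hG]
  beta_reduce
  -- now pure algebra with rpow
  set A : ℝ := 1 + r ^ 2 with hAdef
  have hApos : (0 : ℝ) < A := hA r
  set B : ℝ := A ^ (-(1 : ℝ) / 4) with hBdef
  have hBpos : (0 : ℝ) < B := Real.rpow_pos_of_pos hApos _
  have hpow : ∀ k : ℕ, B ^ k = A ^ (-(k : ℝ) / 4) := by
    intro k
    rw [hBdef, ← Real.rpow_natCast (A ^ (-(1 : ℝ) / 4)) k, ← Real.rpow_mul hApos.le]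
    ring_nf
  have h5 : A ^ (-(5 : ℝ) / 4) = B ^ 5 := by rw [hpow]; norm_num
  have h9 : A ^ (-(9 : ℝ) / 4) = B ^ 9 := by rw [hpow]; norm_num
  have h13 : A ^ (-(13 : ℝ) / 4) = B ^ 13 := by rw [hpow]; norm_num
  have hsq : (c * A ^ (-(5 : ℝ) / 4)) ^ 2 = c ^ 2 * A ^ (-(5 : ℝ) / 2) := by
    rw [mul_pow, ← Real.rpow_natCast (A ^ (-(5 : ℝ) / 4)) 2, ← Real.rpow_mul hApos.le]
    norm_num
  have h25 : (c ^ 2 * A ^ (-(5 : ℝ) / 2)) ^ ((2 : ℝ) / 5)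
      = c ^ ((4 : ℝ) / 5) * B ^ 4 := by
    rw [Real.mul_rpow (by positivity) (by positivity),
      ← Real.rpow_natCast c 2, ← Real.rpow_mul hc.le, ← Real.rpow_mul hApos.le,
      hpow 4]
    norm_num
  have h45 : (c ^ 2 * A ^ (-(5 : ℝ) / 2)) ^ ((4 : ℝ) / 5)
      = c ^ ((8 : ℝ) / 5) * B ^ 8 := by
    rw [Real.mul_rpow (by positivity) (by positivity),
      ← Real.rpow_natCast c 2, ← Real.rpow_mul hc.le, ← Real.rpow_mul hApos.le,
      hpow 8]
    norm_num
  rw [hsq, h25, h45, h5, h9, h13]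
  have hc4 : (0 : ℝ) < c ^ ((4 : ℝ) / 5) := Real.rpow_pos_of_pos hc _
  have hc8 : (0 : ℝ) < c ^ ((8 : ℝ) / 5) := Real.rpow_pos_of_pos hc _
  have hBA : B ^ 4 * A = 1 := by
    rw [hpow 4, show (-((4 : ℕ) : ℝ) / 4) = -1 by norm_num, Real.rpow_neg_one]
    field_simp
  have hkey : B ^ 4 * (1 + r ^ 2) = 1 := hAdef ▸ hBA
  have e1 : 15 / (4 * c ^ ((4 : ℝ) / 5)) * (c ^ ((4 : ℝ) / 5) * B ^ 4)
      = 15 / 4 * B ^ 4 := by field_simp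
  have e2 : 45 / (4 * c ^ ((8 : ℝ) / 5)) * (c ^ ((8 : ℝ) / 5) * B ^ 8)
      = 45 / 4 * B ^ 8 := by field_simp
  have e3 : 2 / r * (-(5 : ℝ) * c / 2 * (r * B ^ 9)) = -5 * c * B ^ 9 := by
    field_simp
  rw [e1, e2, e3]
  linear_combination (45 * c / 4) * B ^ 9 * hkey
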